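/- Let a, b, c, d ∈ Im ℍ ≅ ℝ³ be four points not lying on a common circle, lying on a proper sphere with center m. Then the imaginary part of the cross-ratio cro(a,b,c,d) is parallel to the vector m − a, i.e., Im cro(a,b,c,d) is a normal vector of the circumsphere at a. -/

import Mathlib

noncomputable section
open Quaternion

/-- The quaternionic cross-ratio `cro(a,b,c,d) = (a-b)(b-c)⁻¹(c-d)(d-a)⁻¹`. -/
def qcro (a b c d : Quaternion ℝ) : Quaternion ℝ :=
  (a - b) * (b - c)⁻¹ * (c - d) * (d - a)⁻¹


/-- Points lie on a common circle, or on a common line (degenerate circle). -/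
def ConcyclicOrLine (s : Set (Quaternion ℝ)) : Prop :=
  EuclideanGeometry.Concyclic s ∨ Collinear ℝ s

/-- Key algebraic step: if `x² = y²` then `x(x−y) = −((x−y)y)`. -/
lemma qcro_key {x y : Quaternion ℝ} (h : x * x = y * y) :
    x * (x - y) = -((x - y) * y) := by
  have : x * (x - y) + (x - y) * y = x * x - y * y := by noncomm_ring
  rw [h, sub_self] at this
  exact eq_neg_of_add_eq_zero_left this

theorem im_cro_parallel_sphere_normal (a b c d m : Quaternion ℝ) (r : ℝ)
    (ha : a.re = 0) (hb : b.re = 0) (hc : c.re = 0) (hd : d.re = 0) (hm : m.re = 0)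
    (hab : a ≠ b) (hac : a ≠ c) (had : a ≠ d)
    (hbc : b ≠ c) (hbd : b ≠ d) (hcd : c ≠ d)
    (hnc : ¬ ConcyclicOrLine {a, b, c, d})
    (hr : 0 < r)
    (hsa : dist a m = r) (hsb : dist b m = r) (hsc : dist c m = r) (hsd : dist d m = r) :
    ∃ t : ℝ, (qcro a b c d).im = t • (m - a) := by
  set A := a - m with hA
  set B := b - m with hB
  set C := c - m with hC
  set D := d - m with hD
  -- squares are all `-r²`
  have hsq : ∀ x : Quaternion ℝ, x.re = 0 → dist x m = r →
      (x - m) * (x - m) = -((r ^ 2 : ℝ) : Quaternion ℝ) := by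
    intro x hx hdx
    have hre : (x - m).re = 0 := by simp [hx, hm]
    have hst : star (x - m) = -(x - m) := Quaternion.star_eq_neg.2 hre
    have h1 : (x - m) * star (x - m) = ((normSq (x - m) : ℝ) : Quaternion ℝ) :=
      Quaternion.self_mul_star _
    have h2 : normSq (x - m) = r ^ 2 := by
      rw [Quaternion.normSq_eq_norm_mul_self, ← dist_eq_norm, hdx]; ring
    rw [hst, mul_neg, neg_eq_iff_eq_neg] at h1
    rw [h1, h2]
  have hAA : A * A = B * B := by rw [hsq a ha hsa, hsq b hb hsb]
  have hBB : B * B = C * C := by rw [hsq b hb hsb, hsq c hc hsc]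
  have hCC : C * C = D * D := by rw [hsq c hc hsc, hsq d hd hsd]
  have hDD : D * D = A * A := by rw [hsq d hd hsd, hsq a ha hsa]
  have k1 : A * (A - B) = -((A - B) * B) := qcro_key hAA
  have k2 : B * (B - C) = -((B - C) * C) := qcro_key hBB
  have k3 : C * (C - D) = -((C - D) * D) := qcro_key hCC
  have k4 : D * (D - A) = -((D - A) * A) := qcro_key hDD
  have eab : a - b = A - B := by rw [hA, hB]; abel
  have ebc : b - c = B - C := by rw [hB, hC]; abel
  have ecd : c - d = C - D := by rw [hC, hD]; abel
  have eda : d - a = D - A := by rw [hD, hA]; abel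
  set P : Quaternion ℝ := (a - b) * (b - c) * (c - d) * (d - a) with hP
  have hcommA : A * P = P * A := by
    rw [hP, eab, ebc, ecd, eda]
    calc A * ((A - B) * (B - C) * (C - D) * (D - A))
        = (A * (A - B)) * ((B - C) * ((C - D) * (D - A))) := by noncomm_ring
      _ = (-((A - B) * B)) * ((B - C) * ((C - D) * (D - A))) := by rw [k1]
      _ = -((A - B) * ((B * (B - C)) * ((C - D) * (D - A)))) := by noncomm_ring
      _ = -((A - B) * ((-((B - C) * C)) * ((C - D) * (D - A)))) := by rw [k2]
      _ = (A - B) * ((B - C) * ((C * (C - D)) * (D - A))) := by noncomm_ring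
      _ = (A - B) * ((B - C) * ((-((C - D) * D)) * (D - A))) := by rw [k3]
      _ = -((A - B) * ((B - C) * ((C - D) * (D * (D - A))))) := by noncomm_ring
      _ = -((A - B) * ((B - C) * ((C - D) * (-((D - A) * A))))) := by rw [k4]
      _ = (A - B) * (B - C) * (C - D) * (D - A) * A := by noncomm_ring
  -- relate qcro to P via a real scalar
  have hvne : b - c ≠ 0 := sub_ne_zero.2 hbc
  have hzne : d - a ≠ 0 := sub_ne_zero.2 (Ne.symm had)
  have hstv : star (b - c) = -(b - c) := Quaternion.star_eq_neg.2 (by simp [hb, hc])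
  have hstz : star (d - a) = -(d - a) := Quaternion.star_eq_neg.2 (by simp [hd, ha])
  set s : ℝ := (normSq (b - c))⁻¹ * (normSq (d - a))⁻¹ with hs
  have hq : qcro a b c d = s • P := by
    rw [qcro, Quaternion.inv_def, Quaternion.inv_def, hstv, hstz, hP]
    simp only [smul_neg, mul_neg, neg_mul, neg_neg, mul_smul_comm, smul_mul_assoc, smul_smul]
    rw [hs, mul_comm]
  -- hence qcro commutes with A, and so does its imaginary part
  have hqA : qcro a b c d * A = A * qcro a b c d := by
    rw [hq, smul_mul_assoc, ← hcommA, mul_smul_comm]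
  set q := qcro a b c d with hqdef
  have hreA : A.re = 0 := by simp [hA, ha, hm]
  have hstA : star A = -A := Quaternion.star_eq_neg.2 hreA
  have hAne : A ≠ 0 := by
    rw [hA, sub_ne_zero]
    intro h
    rw [h] at hsa
    simp at hsa
    exact absurd hsa.symm (ne_of_gt hr)
  have hximA : q.im * A = A * q.im := by
    have h1 : ((q.re : ℝ) : Quaternion ℝ) * A = A * ((q.re : ℝ) : Quaternion ℝ) :=
      Quaternion.coe_commutes _ _
    have h2 : q = ((q.re : ℝ) : Quaternion ℝ) + q.im := (Quaternion.re_add_im q).symm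
    have h3 := hqA
    rw [h2] at h3
    rw [add_mul, mul_add, h1] at h3
    exact add_left_cancel h3
  -- q.im * A is real
  have hstim : star q.im = -q.im := Quaternion.star_eq_neg.2 (by simp)
  have hselfadj : star (q.im * A) = q.im * A := by
    rw [star_mul, hstA, hstim, neg_mul_neg, hximA]
  have hreal : q.im * A = (((q.im * A).re : ℝ) : Quaternion ℝ) :=
    Quaternion.star_eq_self.1 hselfadj
  -- conclude
  refine ⟨(q.im * A).re * (normSq A)⁻¹, ?_⟩
  have hmA : m - a = -A := by rw [hA]; abel
  have hinv : A⁻¹ = (normSq A)⁻¹ • star A := Quaternion.inv_def A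
  calc q.im = (q.im * A) * A⁻¹ := (mul_inv_cancel_right₀ hAne q.im).symm
    _ = (((q.im * A).re : ℝ) : Quaternion ℝ) * A⁻¹ := by rw [← hreal]
    _ = ((q.im * A).re) • A⁻¹ := Quaternion.coe_mul_eq_smul _ _
    _ = ((q.im * A).re) • ((normSq A)⁻¹ • (-A)) := by rw [hinv, hstA]
    _ = ((q.im * A).re * (normSq A)⁻¹) • (m - a) := by rw [hmA, smul_smul]
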